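/- Cayley's formula: For every positive integer n, the number of spanning trees in the complete graph K_n on n vertices is n^{n-2}, i.e., τ(K_n) = n^{n-2}. -/

import Mathlib

/-- The number of spanning trees of a simple graph `G`: the number of subgraphs of `G`
that contain every vertex and are trees (connected and acyclic). -/
noncomputable def spanningTreeCount {V : Type*} (G : SimpleGraph V) : ℕ :=
  Nat.card {T : G.Subgraph // T.IsSpanning ∧ T.coe.IsTree}


open SimpleGraph Finset

namespace Cayley

attribute [local instance] Classical.propDecidable
set_option linter.unusedSectionVars false
set_option linter.unusedVariables false

variable {V : Type*} [Fintype V] [LinearOrder V]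

/-- `G` is a tree with vertex support `s`. -/
def IsTreeOn (s : Finset V) (G : SimpleGraph V) : Prop :=
  (∀ ⦃u v⦄, G.Adj u v → u ∈ s) ∧ (∀ u ∈ s, ∀ v ∈ s, G.Reachable u v) ∧
    G.edgeSet.ncard + 1 = s.card ∧ G.IsAcyclic

variable {s : Finset V} {G : SimpleGraph V} {ℓ a : V}

lemma ncard_edgeSet_eq (G : SimpleGraph V) [Fintype G.edgeSet] :
    G.edgeSet.ncard = G.edgeFinset.card :=
  Set.ncard_eq_toFinset_card' _

lemma IsTreeOn.degree_pos (h : IsTreeOn s G) (hs : 2 ≤ s.card) {v : V} (hv : v ∈ s) :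
    0 < G.degree v := by
  obtain ⟨u, hu, hne⟩ : ∃ u ∈ s, u ≠ v := by
    obtain ⟨a, ha, b, hb, hab⟩ := Finset.one_lt_card.mp hs
    rcases eq_or_ne a v with rfl | h'
    · exact ⟨b, hb, fun hbv => hab hbv.symm⟩
    · exact ⟨a, ha, h'⟩
  obtain ⟨w⟩ := h.2.1 v hv u hu
  cases w with
  | nil => exact absurd rfl hne.symm
  | cons hadj _ => exact G.degree_pos_iff_exists_adj v |>.mpr ⟨_, hadj⟩

lemma IsTreeOn.degree_eq_zero (h : IsTreeOn s G) {v : V} (hv : v ∉ s) : G.degree v = 0 := by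
  by_contra h0
  obtain ⟨w, hw⟩ := (G.degree_pos_iff_exists_adj v).mp (Nat.pos_of_ne_zero h0)
  exact hv (h.1 hw)

lemma IsTreeOn.sum_degrees (h : IsTreeOn s G) :
    ∑ v ∈ s, G.degree v = 2 * G.edgeSet.ncard := by
  rw [ncard_edgeSet_eq, ← SimpleGraph.sum_degrees_eq_twice_card_edges]
  exact Finset.sum_subset (Finset.subset_univ s) (fun v _ hv => h.degree_eq_zero hv)

/-- A tree on at least two vertices has a leaf. -/
lemma IsTreeOn.exists_leaf (h : IsTreeOn s G) (hs : 2 ≤ s.card) :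
    ∃ ℓ ∈ s, G.degree ℓ = 1 := by
  by_contra hno
  push_neg at hno
  have h2 : ∀ v ∈ s, 2 ≤ G.degree v := by
    intro v hv
    have := h.degree_pos hs hv
    have := hno v hv
    omega
  have hsum : 2 * s.card ≤ ∑ v ∈ s, G.degree v := by
    calc 2 * s.card = ∑ _v ∈ s, 2 := by rw [Finset.sum_const, smul_eq_mul, mul_comm]
    _ ≤ _ := Finset.sum_le_sum h2
  rw [h.sum_degrees] at hsum
  have hc := h.2.2.1
  omega

/-! ### Removing a vertex -/

/-- Remove all edges at vertex `ℓ`. -/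
def eraseVertex (G : SimpleGraph V) (ℓ : V) : SimpleGraph V where
  Adj u v := G.Adj u v ∧ u ≠ ℓ ∧ v ≠ ℓ
  symm := ⟨fun u v ⟨h, h1, h2⟩ => ⟨h.symm, h2, h1⟩⟩
  loopless := ⟨fun v ⟨h, _, _⟩ => G.loopless.irrefl v h⟩

@[simp] lemma eraseVertex_adj {u v : V} :
    (eraseVertex G ℓ).Adj u v ↔ G.Adj u v ∧ u ≠ ℓ ∧ v ≠ ℓ := Iff.rfl

lemma eraseVertex_le (ℓ : V) : eraseVertex G ℓ ≤ G := fun _ _ h => h.1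

lemma degree_one_iff {ℓ : V} : G.degree ℓ = 1 ↔ ∃ a, G.neighborFinset ℓ = {a} := by
  rw [SimpleGraph.degree, Finset.card_eq_one]

lemma adj_iff_of_nbr (h : G.neighborFinset ℓ = {a}) (v : V) :
    G.Adj ℓ v ↔ v = a := by
  rw [← SimpleGraph.mem_neighborFinset, h, Finset.mem_singleton]

lemma reachable_eraseVertex (ha : ∀ v, G.Adj ℓ v ↔ v = a) {u v : V}
    (hu : u ≠ ℓ) (hv : v ≠ ℓ) (h : G.Reachable u v) : (eraseVertex G ℓ).Reachable u v := by
  obtain ⟨w⟩ := h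
  suffices H : ∀ n (u : V) (w : G.Walk u v), w.length = n → u ≠ ℓ →
      (eraseVertex G ℓ).Reachable u v from H w.length u w rfl hu
  intro n
  induction n using Nat.strong_induction_on with
  | _ n ih =>
    intro u w hn hu
    cases w with
    | nil => exact Reachable.refl _
    | @cons _ x _ hadj p =>
      by_cases hx : x = ℓ
      · subst hx
        cases p with
        | nil => exact absurd rfl hv
        | @cons _ y _ hadj2 q =>
          have hy : y = a := (ha _).1 hadj2
          have hu' : u = a := (ha _).1 hadj.symm
          have hyl : y ≠ x := by
            rintro rfl
            exact G.loopless.irrefl _ hadj2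
          rw [hu', ← hy]
          exact ih q.length (by simp at hn; omega) y q rfl hyl
      · refine Reachable.trans
          ⟨Walk.cons (show (eraseVertex G ℓ).Adj u x from ⟨hadj, hu, hx⟩) Walk.nil⟩ ?_
        exact ih p.length (by simp at hn; omega) x p rfl hx

lemma edgeSet_eraseVertex (h : G.neighborFinset ℓ = {a}) :
    (eraseVertex G ℓ).edgeSet = G.edgeSet \ {s(ℓ, a)} := by
  ext e
  induction e with
  | _ u v =>
    simp only [SimpleGraph.mem_edgeSet, eraseVertex_adj, Set.mem_diff, Set.mem_singleton_iff]
    constructor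
    · rintro ⟨hadj, hu, hv⟩
      refine ⟨hadj, ?_⟩
      intro he
      rw [Sym2.eq_iff] at he
      rcases he with ⟨rfl, rfl⟩ | ⟨rfl, rfl⟩
      · exact hu rfl
      · exact hv rfl
    · rintro ⟨hadj, hne⟩
      refine ⟨hadj, ?_, ?_⟩
      · rintro rfl
        exact hne (by rw [(adj_iff_of_nbr h v).1 hadj])
      · rintro rfl
        exact hne (by rw [(adj_iff_of_nbr h u).1 hadj.symm, Sym2.eq_swap])

lemma nbrFinset_eraseVertex_other {v : V} (hv : v ≠ ℓ) :
    (eraseVertex G ℓ).neighborFinset v = (G.neighborFinset v).erase ℓ := by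
  ext u
  rw [SimpleGraph.mem_neighborFinset, Finset.mem_erase, SimpleGraph.mem_neighborFinset,
    eraseVertex_adj]
  constructor
  · rintro ⟨hadj, _, hu⟩
    exact ⟨hu, hadj⟩
  · rintro ⟨hu, hadj⟩
    exact ⟨hadj, hv, hu⟩

lemma degree_eraseVertex_other (h : G.neighborFinset ℓ = {a}) {v : V} (hv : v ≠ ℓ) :
    (eraseVertex G ℓ).degree v = if v = a then G.degree v - 1 else G.degree v := by
  rw [SimpleGraph.degree, SimpleGraph.degree, nbrFinset_eraseVertex_other hv]
  split_ifs with hva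
  · rw [Finset.card_erase_of_mem]
    rw [SimpleGraph.mem_neighborFinset]
    subst hva
    exact ((adj_iff_of_nbr h v).2 rfl).symm
  · rw [Finset.erase_eq_of_notMem]
    rw [SimpleGraph.mem_neighborFinset]
    intro hadj
    exact hva ((adj_iff_of_nbr h v).1 hadj.symm)

/-- Removing a leaf from a tree yields a tree. -/
lemma IsTreeOn.eraseVertexLeaf (hT : IsTreeOn s G) (hℓ : ℓ ∈ s)
    (h : G.neighborFinset ℓ = {a}) : IsTreeOn (s.erase ℓ) (eraseVertex G ℓ) := by
  have hadj : G.Adj ℓ a := (adj_iff_of_nbr h a).2 rfl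
  refine ⟨?_, ?_, ?_, ?_⟩
  · rintro u v ⟨huv, hu, _⟩
    exact Finset.mem_erase.mpr ⟨hu, hT.1 huv⟩
  · intro u hu v hv
    rw [Finset.mem_erase] at hu hv
    exact reachable_eraseVertex (adj_iff_of_nbr h) hu.1 hv.1 (hT.2.1 u hu.2 v hv.2)
  · rw [edgeSet_eraseVertex h, Set.ncard_diff_singleton_of_mem (by exact hadj),
      Finset.card_erase_of_mem hℓ]
    have h1 := hT.2.2.1
    have h2 : 0 < G.edgeSet.ncard :=
      (Set.ncard_pos (Set.toFinite _)).mpr ⟨s(ℓ, a), hadj⟩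
    omega
  · intro v c hc
    exact hT.2.2.2 (c.mapLe (eraseVertex_le ℓ)) (hc.mapLe _)

/-! ### Adding a pendant edge -/

/-- Add the edge `ℓa` to `G`; a plain `def` so that instance search does not
unfold it (keeping decidability instances uniform). -/
def addEdge (G : SimpleGraph V) (ℓ a : V) : SimpleGraph V := G ⊔ edge ℓ a

lemma addEdge_eq (G : SimpleGraph V) (ℓ a : V) : addEdge G ℓ a = G ⊔ edge ℓ a := rfl

lemma le_addEdge : G ≤ addEdge G ℓ a := le_sup_left

lemma sup_edge_adj_iff (hG : ∀ v, ¬ G.Adj ℓ v) (hla : ℓ ≠ a) {u v : V} :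
    (addEdge G ℓ a).Adj u v ↔ G.Adj u v ∨ (u = ℓ ∧ v = a) ∨ (u = a ∧ v = ℓ) := by
  rw [addEdge_eq]
  simp only [sup_adj, edge_adj]
  constructor
  · rintro (h | ⟨(⟨rfl, rfl⟩ | ⟨rfl, rfl⟩), hne⟩)
    · exact Or.inl h
    · exact Or.inr (Or.inl ⟨rfl, rfl⟩)
    · exact Or.inr (Or.inr ⟨rfl, rfl⟩)
  · rintro (h | ⟨rfl, rfl⟩ | ⟨rfl, rfl⟩)
    · exact Or.inl h
    · exact Or.inr ⟨Or.inl ⟨rfl, rfl⟩, hla⟩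
    · exact Or.inr ⟨Or.inr ⟨rfl, rfl⟩, fun h' => hla h'.symm⟩

lemma no_adj_of_not_mem (hT : ∀ ⦃u v⦄, G.Adj u v → u ∈ s) (hℓ : ℓ ∉ s) :
    ∀ v, ¬ G.Adj ℓ v := fun v h => hℓ (hT h)

lemma nbrFinset_sup_edge_left (hG : ∀ v, ¬ G.Adj ℓ v) (hla : ℓ ≠ a) :
    (addEdge G ℓ a).neighborFinset ℓ = {a} := by
  ext v
  rw [SimpleGraph.mem_neighborFinset, sup_edge_adj_iff hG hla, Finset.mem_singleton]
  constructor
  · rintro (h | ⟨_, rfl⟩ | ⟨rfl, h⟩)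
    · exact absurd h (hG v)
    · rfl
    · exact absurd rfl hla
  · rintro rfl; exact Or.inr (Or.inl ⟨rfl, rfl⟩)

lemma degree_sup_edge_other (hG : ∀ v, ¬ G.Adj ℓ v) (hla : ℓ ≠ a) {v : V}
    (hv : v ≠ ℓ) :
    (addEdge G ℓ a).degree v = if v = a then G.degree v + 1 else G.degree v := by
  rw [SimpleGraph.degree, SimpleGraph.degree]
  split_ifs with hva
  · have : (addEdge G ℓ a).neighborFinset v = insert ℓ (G.neighborFinset v) := by
      ext u
      rw [SimpleGraph.mem_neighborFinset, sup_edge_adj_iff hG hla, Finset.mem_insert,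
        SimpleGraph.mem_neighborFinset]
      constructor
      · rintro (h | ⟨h1, _⟩ | ⟨_, rfl⟩)
        · exact Or.inr h
        · exact absurd h1 hv
        · exact Or.inl rfl
      · rintro (rfl | h)
        · exact Or.inr (Or.inr ⟨hva, rfl⟩)
        · exact Or.inl h
    rw [this, Finset.card_insert_of_notMem (by
      rw [SimpleGraph.mem_neighborFinset]
      exact fun h => hG v h.symm)]
  · have : (addEdge G ℓ a).neighborFinset v = G.neighborFinset v := by
      ext u
      rw [SimpleGraph.mem_neighborFinset, sup_edge_adj_iff hG hla,
        SimpleGraph.mem_neighborFinset]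
      constructor
      · rintro (h | ⟨rfl, _⟩ | ⟨rfl, _⟩)
        · exact h
        · exact absurd rfl hv
        · exact absurd rfl hva
      · exact Or.inl
    rw [this]

lemma edgeSet_sup_edge (hla : ℓ ≠ a) :
    (addEdge G ℓ a).edgeSet = insert s(ℓ, a) G.edgeSet := by
  rw [addEdge_eq, edgeSet_sup, edge_edgeSet_of_ne hla, Set.union_comm]
  rfl

/-- Adding a pendant edge to a tree yields a tree. -/
lemma IsTreeOn.supEdge (hT : IsTreeOn s G) (ha : a ∈ s) (hℓ : ℓ ∉ s) :
    IsTreeOn (insert ℓ s) (addEdge G ℓ a) := by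
  have hGl : ∀ v, ¬ G.Adj ℓ v := no_adj_of_not_mem hT.1 hℓ
  have hla : ℓ ≠ a := fun h => hℓ (h ▸ ha)
  have hle : G ≤ addEdge G ℓ a := le_addEdge
  have hadjla : (addEdge G ℓ a).Adj ℓ a :=
    (sup_edge_adj_iff hGl hla).2 (Or.inr (Or.inl ⟨rfl, rfl⟩))
  refine ⟨?_, ?_, ?_, ?_⟩
  · intro u v huv
    rw [sup_edge_adj_iff hGl hla] at huv
    rcases huv with h | ⟨rfl, _⟩ | ⟨rfl, _⟩
    · exact Finset.mem_insert_of_mem (hT.1 h)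
    · exact Finset.mem_insert_self _ _
    · exact Finset.mem_insert_of_mem ha
  · intro u hu v hv
    rw [Finset.mem_insert] at hu hv
    have key : ∀ w ∈ s, (addEdge G ℓ a).Reachable ℓ w := fun w hw =>
      (Reachable.trans ⟨Walk.cons hadjla Walk.nil⟩ ((hT.2.1 a ha w hw).mono hle))
    rcases hu with rfl | hu
    · rcases hv with rfl | hv
      · exact Reachable.refl _
      · exact key v hv
    · rcases hv with rfl | hv
      · exact (key u hu).symm
      · exact (hT.2.1 u hu v hv).mono hle
  · rw [edgeSet_sup_edge hla, Set.ncard_insert_of_notMem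
      (s := G.edgeSet) (fun h => hGl a ((SimpleGraph.mem_edgeSet G).mp h)) (Set.toFinite _),
      Finset.card_insert_of_notMem hℓ]
    have := hT.2.2.1
    omega
  · -- acyclicity
    intro v c hc
    by_cases hl : ℓ ∈ c.support
    · have hc' := hc.rotate hl
      set c' := c.rotate ℓ hl with hc'def
      cases hcc : c' with
      | nil => rw [hcc] at hc'; exact hc'.ne_nil rfl
      | @cons _ x _ hadj p =>
        rw [hcc] at hc'
        have hx : x = a := by
          rcases (sup_edge_adj_iff hGl hla).1 hadj with h | ⟨_, rfl⟩ | ⟨h1, _⟩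
          · exact absurd h (hGl x)
          · rfl
          · exact absurd h1 hla
        rw [Walk.cons_isCycle_iff] at hc'
        have hxl : x ≠ ℓ := fun h => (addEdge G ℓ a).loopless.irrefl ℓ (h ▸ hadj)
        obtain ⟨y, hyadj, q, hq⟩ := Walk.exists_eq_cons_of_ne (Ne.symm hxl) p.reverse
        have hy : y = a := by
          rcases (sup_edge_adj_iff hGl hla).1 hyadj with h | ⟨_, rfl⟩ | ⟨h1, _⟩
          · exact absurd h (hGl y)
          · rfl
          · exact absurd h1 hla
        have hmem : s(ℓ, y) ∈ p.reverse.edges := by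
          rw [hq, Walk.edges_cons]
          exact List.mem_cons_self
        rw [Walk.edges_reverse, List.mem_reverse] at hmem
        have hxy : y = x := hy.trans hx.symm
        exact hc'.2 (hxy ▸ hmem)
    · -- ℓ not on the cycle: transfer to G
      have hedges : ∀ e ∈ c.edges, e ∈ G.edgeSet := by
        intro e he
        have he2 := c.edges_subset_edgeSet he
        induction e with
        | _ x y =>
          rw [SimpleGraph.mem_edgeSet] at he2 ⊢
          rcases (sup_edge_adj_iff hGl hla).1 he2 with h | ⟨h1, _⟩ | ⟨_, h1⟩
          · exact h
          · exact absurd (h1 ▸ c.fst_mem_support_of_mem_edges he) hl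
          · exact absurd (h1 ▸ c.snd_mem_support_of_mem_edges he) hl
      exact hT.2.2.2 (c.transfer G hedges) (hc.transfer hedges)


/-! ### The Prüfer encoding -/

variable [Nonempty V]

noncomputable def leafMin (s : Finset V) (G : SimpleGraph V) : V :=
  if h : (s.filter fun v => G.degree v = 1).Nonempty then
    (s.filter fun v => G.degree v = 1).min' h
  else Classical.arbitrary V

noncomputable def nbrOf (G : SimpleGraph V) (v : V) : V :=
  if h : (G.neighborFinset v).Nonempty then (G.neighborFinset v).min' h
  else Classical.arbitrary V

lemma nbrOf_eq (h : G.neighborFinset ℓ = {a}) : nbrOf G ℓ = a := by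
  rw [nbrOf]
  rw [dif_pos (by rw [h]; exact ⟨a, Finset.mem_singleton_self a⟩)]
  have hmem := Finset.min'_mem (G.neighborFinset ℓ)
    (by rw [h]; exact ⟨a, Finset.mem_singleton_self a⟩)
  have hcard : (G.neighborFinset ℓ).card ≤ 1 := by rw [h]; exact le_refl _
  have ha : a ∈ G.neighborFinset ℓ := by rw [h]; exact Finset.mem_singleton_self a
  exact Finset.card_le_one.mp hcard _ hmem _ ha

noncomputable def encode : ℕ → Finset V → SimpleGraph V → List V
  | 0, _, _ => []
  | k+1, s, G =>
      nbrOf G (leafMin s G) ::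
        encode k (s.erase (leafMin s G)) (eraseVertex G (leafMin s G))

noncomputable def minNotIn (s : Finset V) (L : List V) : V :=
  if h : (s \ L.toFinset).Nonempty then (s \ L.toFinset).min' h else Classical.arbitrary V

noncomputable def decode : ℕ → Finset V → List V → SimpleGraph V
  | 0, s, _ =>
      if h : s.Nonempty then addEdge (⊥ : SimpleGraph V) (s.min' h) (s.max' h) else ⊥
  | _+1, _, [] => ⊥
  | k+1, s, a :: L =>
      addEdge (decode k (s.erase (minNotIn s (a :: L))) L) (minNotIn s (a :: L)) a

lemma encode_length (k : ℕ) (s : Finset V) (G : SimpleGraph V) :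
    (encode k s G).length = k := by
  induction k generalizing s G with
  | zero => rfl
  | succ k ih => simp [encode, ih]

lemma minNotIn_spec {L : List V} (h : L.toFinset.card < s.card) :
    minNotIn s L ∈ s ∧ minNotIn s L ∉ L := by
  have hne : (s \ L.toFinset).Nonempty := by
    rw [Finset.sdiff_nonempty]
    intro hsub
    exact absurd (Finset.card_le_card hsub) (by omega)
  rw [minNotIn, dif_pos hne]
  have := Finset.min'_mem _ hne
  rw [Finset.mem_sdiff, List.mem_toFinset] at this
  exact this

/-- On a two-element vertex set, the only tree is the single edge
between the minimum and the maximum. -/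
lemma IsTreeOn.eq_of_card_two (hT : IsTreeOn s G) (h2 : s.card = 2) :
    ∃ h : s.Nonempty, G = addEdge (⊥ : SimpleGraph V) (s.min' h) (s.max' h) := by
  have hne : s.Nonempty := Finset.card_pos.mp (by omega)
  refine ⟨hne, ?_⟩
  set m := s.min' hne
  set M := s.max' hne
  have hm : m ∈ s := s.min'_mem hne
  have hM : M ∈ s := s.max'_mem hne
  have hlt : m < M := s.min'_lt_max'_of_card (by omega)
  have hmM : m ≠ M := ne_of_lt hlt
  have hpair : ({m, M} : Finset V) = s := by
    apply Finset.eq_of_subset_of_card_le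
    · intro x hx
      rcases Finset.mem_insert.mp hx with rfl | hx
      · exact hm
      · exact Finset.mem_singleton.mp hx ▸ hM
    · rw [h2, Finset.card_insert_of_notMem (by simpa using hmM), Finset.card_singleton]
  have hmem : ∀ x ∈ s, x = m ∨ x = M := by
    intro x hx
    rw [← hpair] at hx
    simpa using hx
  have key : ∀ x y : V, x ∈ s → y ∈ s → x ≠ y → G.Reachable x y → G.Adj x y := by
    intro x y hx hy hxy hr
    obtain ⟨w⟩ := hr
    cases w with
    | nil => exact absurd rfl hxy
    | @cons _ z _ hxz p =>
      have hz : z ∈ s := hT.1 hxz.symm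
      have hzx : z ≠ x := fun e => G.loopless.irrefl _ (e ▸ hxz)
      have hyz : y = z := by
        rcases hmem y hy with rfl | rfl <;> rcases hmem z hz with h' | h' <;>
          rcases hmem x hx with rfl | rfl <;> simp_all
      exact hyz ▸ hxz
  have hadj : G.Adj m M := key m M hm hM hmM (hT.2.1 m hm M hM)
  have hcard : G.edgeSet.ncard = 1 := by
    have := hT.2.2.1
    omega
  obtain ⟨e, he⟩ := Set.ncard_eq_one.mp hcard
  have heq : e = s(m, M) := by
    have : s(m, M) ∈ G.edgeSet := hadj
    rw [he, Set.mem_singleton_iff] at this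
    exact this.symm
  apply SimpleGraph.edgeSet_inj.mp
  rw [he, heq, addEdge_eq, edgeSet_sup, edgeSet_bot, Set.empty_union, edge_edgeSet_of_ne hmM]

lemma leafMin_spec (hT : IsTreeOn s G) (hs : 2 ≤ s.card) :
    leafMin s G ∈ s ∧ G.degree (leafMin s G) = 1 := by
  have hne : (s.filter fun v => G.degree v = 1).Nonempty := by
    obtain ⟨ℓ, hℓ, hdeg⟩ := hT.exists_leaf hs
    exact ⟨ℓ, Finset.mem_filter.mpr ⟨hℓ, hdeg⟩⟩
  rw [leafMin, dif_pos hne]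
  have := Finset.min'_mem _ hne
  rw [Finset.mem_filter] at this
  exact this

lemma degree_eq_one_of_card_two (hT : IsTreeOn s G) (h2 : s.card = 2) {v : V}
    (hv : v ∈ s) : G.degree v = 1 := by
  obtain ⟨u, w, huw, hs⟩ := Finset.card_eq_two.mp h2
  have hsum : ∑ x ∈ s, G.degree x = 2 := by
    rw [hT.sum_degrees]
    have := hT.2.2.1
    omega
  rw [hs, Finset.sum_pair huw] at hsum
  have hu : 0 < G.degree u := hT.degree_pos (by omega) (hs ▸ Finset.mem_insert_self _ _)
  have hw : 0 < G.degree w := hT.degree_pos (by omega)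
    (hs ▸ Finset.mem_insert_of_mem (Finset.mem_singleton_self _))
  rw [hs] at hv
  rcases Finset.mem_insert.mp hv with rfl | hv
  · omega
  · rw [Finset.mem_singleton] at hv
    subst hv
    omega

lemma eraseVertex_sup_edge (hno : ∀ v, ¬ G.Adj ℓ v) (hla : ℓ ≠ a) :
    eraseVertex (addEdge G ℓ a) ℓ = G := by
  ext u v
  rw [eraseVertex_adj, sup_edge_adj_iff hno hla]
  constructor
  · rintro ⟨h | ⟨rfl, _⟩ | ⟨_, rfl⟩, hu, hv⟩
    · exact h
    · exact absurd rfl hu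
    · exact absurd rfl hv
  · intro h
    exact ⟨Or.inl h, fun e => hno v (e ▸ h), fun e => hno u (e ▸ h.symm)⟩

lemma sup_edge_eraseVertex (h : G.neighborFinset ℓ = {a}) :
    addEdge (eraseVertex G ℓ) ℓ a = G := by
  have hadj : G.Adj ℓ a := (adj_iff_of_nbr h a).2 rfl
  have hla : ℓ ≠ a := G.ne_of_adj hadj
  have hno : ∀ v, ¬ (eraseVertex G ℓ).Adj ℓ v := fun v hv => hv.2.1 rfl
  ext u v
  rw [sup_edge_adj_iff hno hla, eraseVertex_adj]
  constructor
  · rintro (⟨h', _, _⟩ | ⟨rfl, rfl⟩ | ⟨rfl, rfl⟩)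
    · exact h'
    · exact hadj
    · exact hadj.symm
  · intro huv
    by_cases hu : u = ℓ
    · subst hu
      exact Or.inr (Or.inl ⟨rfl, (adj_iff_of_nbr h v).1 huv⟩)
    · by_cases hv : v = ℓ
      · subst hv
        exact Or.inr (Or.inr ⟨(adj_iff_of_nbr h u).1 huv.symm, rfl⟩)
      · exact Or.inl ⟨huv, hu, hv⟩

lemma filter_deg_eq_sdiff {L : List V} (hs : ∀ v ∈ s, (G.degree v = 1 ↔ v ∉ L)) :
    s.filter (fun v => G.degree v = 1) = s \ L.toFinset := by
  ext v
  rw [Finset.mem_filter, Finset.mem_sdiff, List.mem_toFinset]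
  exact ⟨fun ⟨hv, h1⟩ => ⟨hv, (hs v hv).1 h1⟩, fun ⟨hv, h1⟩ => ⟨hv, (hs v hv).2 h1⟩⟩

lemma leafMin_eq_minNotIn {L : List V}
    (hset : s.filter (fun v => G.degree v = 1) = s \ L.toFinset) :
    leafMin s G = minNotIn s L := by
  rw [leafMin, minNotIn, hset]

/-- Main induction, decoding direction. -/
lemma decode_spec (k : ℕ) : ∀ (s : Finset V) (L : List V), s.card = k + 2 →
    L.length = k → (∀ x ∈ L, x ∈ s) →
    IsTreeOn s (decode k s L) ∧
    (∀ v ∈ s, ((decode k s L).degree v = 1 ↔ v ∉ L)) ∧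
    encode k s (decode k s L) = L := by
  induction k with
  | zero =>
    intro s L hcard hlen _hvals
    have hL : L = [] := List.length_eq_zero_iff.mp hlen
    subst hL
    have hne : s.Nonempty := Finset.card_pos.mp (by omega)
    have hd : decode 0 s ([] : List V) =
        addEdge (⊥ : SimpleGraph V) (s.min' hne) (s.max' hne) := by
      rw [decode, dif_pos hne]
    obtain ⟨m, hm⟩ : ∃ x, s.min' hne = x := ⟨_, rfl⟩
    obtain ⟨M, hM⟩ : ∃ x, s.max' hne = x := ⟨_, rfl⟩
    rw [hm, hM] at hd
    have hlt := s.min'_lt_max'_of_card (h₂ := by omega)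
    rw [hm, hM] at hlt
    have hmM : m ≠ M := ne_of_lt hlt
    have hpair : insert m ({M} : Finset V) = s := by
      apply Finset.eq_of_subset_of_card_le
      · intro x hx
        rcases Finset.mem_insert.mp hx with rfl | hx
        · exact hm ▸ s.min'_mem hne
        · exact Finset.mem_singleton.mp hx ▸ hM ▸ s.max'_mem hne
      · rw [hcard, Finset.card_insert_of_notMem (by simpa using hmM), Finset.card_singleton]
    have hbot : IsTreeOn ({M} : Finset V) (⊥ : SimpleGraph V) := by
      refine ⟨fun u v h => h.elim, ?_, ?_, isAcyclic_bot⟩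
      · intro u hu v hv
        rw [Finset.mem_singleton] at hu hv
        rw [hu, hv]
      · rw [edgeSet_bot, Set.ncard_empty, Finset.card_singleton]
    have htree : IsTreeOn s (decode 0 s ([] : List V)) := by
      rw [hd, ← hpair]
      exact hbot.supEdge (Finset.mem_singleton_self _) (by simpa using hmM)
    refine ⟨htree, ?_, rfl⟩
    intro v hv
    simp only [List.not_mem_nil, not_false_iff, iff_true]
    exact degree_eq_one_of_card_two htree hcard hv
  | succ k ih =>
    intro s L hcard hlen hvals
    obtain ⟨a, L', rfl⟩ : ∃ a L', L = a :: L' := by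
      cases L with
      | nil => simp at hlen
      | cons a L' => exact ⟨a, L', rfl⟩
    have hlen' : L'.length = k := by simpa using hlen
    have htf : (a :: L').toFinset.card < s.card := by
      calc (a :: L').toFinset.card ≤ (a :: L').length := (a :: L').toFinset_card_le
      _ = k + 1 := hlen
      _ < s.card := by omega
    obtain ⟨hℓs, hℓL⟩ := minNotIn_spec htf
    set ℓ := minNotIn s (a :: L') with hℓdef
    have hla : ℓ ≠ a := fun e => hℓL (e ▸ List.mem_cons_self)
    have hℓL' : ℓ ∉ L' := fun h => hℓL (List.mem_cons_of_mem a h)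
    have has : a ∈ s := hvals a (List.mem_cons_self)
    have hcard' : (s.erase ℓ).card = k + 2 := by
      rw [Finset.card_erase_of_mem hℓs]; omega
    have hvals' : ∀ x ∈ L', x ∈ s.erase ℓ := by
      intro x hx
      exact Finset.mem_erase.mpr ⟨fun e => hℓL' (e ▸ hx), hvals x (List.mem_cons_of_mem a hx)⟩
    obtain ⟨hT', hdeg', henc'⟩ := ih (s.erase ℓ) L' hcard' hlen' hvals'
    set T' := decode k (s.erase ℓ) L' with hT'def
    have hd : decode (k+1) s (a :: L') = addEdge T' ℓ a := by
      rw [decode]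
    have has' : a ∈ s.erase ℓ := Finset.mem_erase.mpr ⟨fun e => hla e.symm, has⟩
    have hℓs' : ℓ ∉ s.erase ℓ := Finset.notMem_erase ℓ s
    have htree : IsTreeOn s (decode (k+1) s (a :: L')) := by
      rw [hd, ← Finset.insert_erase hℓs]
      exact hT'.supEdge has' hℓs'
    have hGl' : ∀ v, ¬ T'.Adj ℓ v := no_adj_of_not_mem hT'.1 hℓs'
    have hnbr : (addEdge T' ℓ a).neighborFinset ℓ = {a} := nbrFinset_sup_edge_left hGl' hla
    have hdegchar : ∀ v ∈ s, ((decode (k+1) s (a :: L')).degree v = 1 ↔ v ∉ (a :: L')) := by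
      intro v hv
      rw [hd]
      by_cases hvl : v = ℓ
      · subst hvl
        refine iff_of_true ?_ hℓL
        exact degree_one_iff.mpr ⟨a, hnbr⟩
      · rw [degree_sup_edge_other hGl' hla hvl]
        by_cases hva : v = a
        · subst hva
          rw [if_pos rfl]
          refine iff_of_false ?_ (by simp)
          have := hT'.degree_pos (by omega) has'
          omega
        · rw [if_neg hva]
          rw [hdeg' v (Finset.mem_erase.mpr ⟨hvl, hv⟩)]
          simp [hva]
    refine ⟨htree, hdegchar, ?_⟩
    -- encode (decode) = a :: L'
    rw [hd] at hdegchar ⊢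
    have hset := filter_deg_eq_sdiff (G := addEdge T' ℓ a) hdegchar
    have hmin : leafMin s (addEdge T' ℓ a) = ℓ :=
      leafMin_eq_minNotIn (G := addEdge T' ℓ a) hset
    rw [encode, hmin, nbrOf_eq hnbr, eraseVertex_sup_edge hGl' hla, henc']

/-- Main induction, encoding direction. -/
lemma encode_spec (k : ℕ) : ∀ (s : Finset V) (G : SimpleGraph V), s.card = k + 2 →
    IsTreeOn s G →
    (∀ x ∈ encode k s G, x ∈ s) ∧
    (∀ v ∈ s, (G.degree v = 1 ↔ v ∉ encode k s G)) ∧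
    decode k s (encode k s G) = G := by
  induction k with
  | zero =>
    intro s G hcard hT
    obtain ⟨hne, hG⟩ := hT.eq_of_card_two hcard
    refine ⟨by simp [encode], ?_, ?_⟩
    · intro v hv
      simp only [encode, List.not_mem_nil, not_false_iff, iff_true]
      exact degree_eq_one_of_card_two hT hcard hv
    · show decode 0 s (encode 0 s G) = G
      rw [decode, dif_pos hne]
      exact hG.symm
  | succ k ih =>
    intro s G hcard hT
    obtain ⟨hℓs, hdegℓ⟩ := leafMin_spec hT (by omega)
    set ℓ := leafMin s G with hℓdef
    obtain ⟨a, hnbr⟩ := degree_one_iff.mp hdegℓ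
    have hadj : G.Adj ℓ a := (adj_iff_of_nbr hnbr a).2 rfl
    have hla : ℓ ≠ a := G.ne_of_adj hadj
    have haS : a ∈ s := hT.1 hadj.symm
    have hT' : IsTreeOn (s.erase ℓ) (eraseVertex G ℓ) := hT.eraseVertexLeaf hℓs hnbr
    set T' := eraseVertex G ℓ with hT'def
    have hcard' : (s.erase ℓ).card = k + 2 := by rw [Finset.card_erase_of_mem hℓs]; omega
    obtain ⟨hmem', hdeg', hdec'⟩ := ih (s.erase ℓ) T' hcard' hT'
    have henc : encode (k+1) s G = a :: encode k (s.erase ℓ) T' := by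
      rw [encode, nbrOf_eq hnbr]
    have has' : a ∈ s.erase ℓ := Finset.mem_erase.mpr ⟨fun e => hla e.symm, haS⟩
    have hmemcomp : ∀ x ∈ encode (k+1) s G, x ∈ s := by
      rw [henc]
      intro x hx
      rcases List.mem_cons.mp hx with rfl | hx
      · exact haS
      · exact Finset.mem_of_mem_erase (hmem' x hx)
    have hℓnot : ℓ ∉ encode (k+1) s G := by
      rw [henc]
      intro h
      rcases List.mem_cons.mp h with h | h
      · exact hla h
      · exact Finset.notMem_erase ℓ s (hmem' ℓ h)
    have hdegchar : ∀ v ∈ s, (G.degree v = 1 ↔ v ∉ encode (k+1) s G) := by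
      intro v hv
      by_cases hvl : v = ℓ
      · subst hvl
        exact iff_of_true hdegℓ hℓnot
      · have hdv := degree_eraseVertex_other hnbr hvl
        rw [henc]
        by_cases hva : v = a
        · have h1 : 0 < T'.degree v := hT'.degree_pos (by omega)
            (Finset.mem_erase.mpr ⟨hvl, hv⟩)
          rw [hdv, if_pos hva] at h1
          refine iff_of_false (by omega) ?_
          exact fun h => h (List.mem_cons.mpr (Or.inl hva))
        · have h2 := hdeg' v (Finset.mem_erase.mpr ⟨hvl, hv⟩)
          rw [hdv, if_neg hva] at h2
          rw [h2]
          simp [hva]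
    refine ⟨hmemcomp, hdegchar, ?_⟩
    rw [henc] at hdegchar
    have hmin : minNotIn s (a :: encode k (s.erase ℓ) T') = ℓ :=
      (leafMin_eq_minNotIn (filter_deg_eq_sdiff hdegchar)).symm
    rw [henc, decode, hmin, hdec']
    exact sup_edge_eraseVertex hnbr

/-! ### Counting -/

lemma card_isTreeOn (k : ℕ) (s : Finset V) (h : s.card = k + 2) :
    Nat.card {G : SimpleGraph V // IsTreeOn s G} = s.card ^ k := by
  have e1 : {G : SimpleGraph V // IsTreeOn s G} ≃
      {L : List V // L.length = k ∧ ∀ x ∈ L, x ∈ s} :=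
  { toFun := fun G => ⟨encode k s G.1, encode_length k s G.1,
      (encode_spec k s G.1 h G.2).1⟩
    invFun := fun L => ⟨decode k s L.1, (decode_spec k s L.1 h L.2.1 L.2.2).1⟩
    left_inv := fun G => Subtype.ext (encode_spec k s G.1 h G.2).2.2
    right_inv := fun L => Subtype.ext (decode_spec k s L.1 h L.2.1 L.2.2).2.2 }
  have e2 : {L : List V // L.length = k ∧ ∀ x ∈ L, x ∈ s} ≃ (Fin k → ↥s) :=
  { toFun := fun L i => ⟨L.1.get (Fin.cast L.2.1.symm i), L.2.2 _ (L.1.get_mem _)⟩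
    invFun := fun f => ⟨List.ofFn (fun i => (f i : V)), by simp, by
      intro x hx
      rw [List.mem_ofFn] at hx
      obtain ⟨i, rfl⟩ := hx
      exact (f i).2⟩
    left_inv := fun L => by
      refine Subtype.ext (List.ext_get (by simp [L.2.1]) fun i h1 h2 => ?_)
      simp
    right_inv := fun f => by
      funext i
      apply Subtype.ext
      simp }
  rw [Nat.card_congr (e1.trans e2), Nat.card_eq_fintype_card, Fintype.card_fun,
    Fintype.card_coe, Fintype.card_fin]

lemma isAcyclic_of_iso {α β : Type*} {G : SimpleGraph α} {H : SimpleGraph β}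
    (e : G ≃g H) (hH : H.IsAcyclic) : G.IsAcyclic := by
  intro v c hc
  exact hH (c.map e.toHom)
    ((SimpleGraph.Walk.map_isCycle_iff_of_injective (by exact e.toEquiv.injective)).2 hc)

lemma isTree_iff_of_iso {α β : Type*} {G : SimpleGraph α} {H : SimpleGraph β}
    (e : G ≃g H) : G.IsTree ↔ H.IsTree := by
  constructor
  · intro h
    exact ⟨e.connected_iff.mp h.isConnected, isAcyclic_of_iso e.symm h.2⟩
  · intro h
    exact ⟨e.connected_iff.mpr h.isConnected, isAcyclic_of_iso e h.2⟩

end Cayley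

section Bridge

open Cayley SimpleGraph

attribute [local instance] Classical.propDecidable

lemma isTreeOn_univ_iff {n : ℕ} (hn : 1 ≤ n) (G : SimpleGraph (Fin n)) :
    IsTreeOn (Finset.univ : Finset (Fin n)) G ↔ G.IsTree := by
  constructor
  · intro h
    refine ⟨?_, h.2.2.2⟩
    rw [connected_iff]
    refine ⟨fun u v => h.2.1 u (Finset.mem_univ u) v (Finset.mem_univ v), ?_⟩
    exact ⟨⟨0, hn⟩⟩
  · intro h
    refine ⟨fun u v _ => Finset.mem_univ u, fun u _ v _ => h.isConnected.preconnected u v,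
      ?_, h.2⟩
    rw [ncard_edgeSet_eq, h.card_edgeFinset, Finset.card_univ, Fintype.card_fin]

lemma card_trees {n : ℕ} (hn : 2 ≤ n) :
    Nat.card {G : SimpleGraph (Fin n) // G.IsTree} = n ^ (n - 2) := by
  have h1 : Nat.card {G : SimpleGraph (Fin n) // G.IsTree} =
      Nat.card {G : SimpleGraph (Fin n) // IsTreeOn Finset.univ G} :=
    Nat.card_congr (Equiv.subtypeEquivRight fun G =>
      (isTreeOn_univ_iff (by omega) G).symm)
  haveI : Nonempty (Fin n) := ⟨⟨0, by omega⟩⟩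
  rw [h1, card_isTreeOn (n - 2) Finset.univ
    (by rw [Finset.card_univ, Fintype.card_fin]; omega)]
  rw [Finset.card_univ, Fintype.card_fin]

lemma card_trees_one :
    Nat.card {G : SimpleGraph (Fin 1) // G.IsTree} = 1 := by
  have hall : ∀ G H : SimpleGraph (Fin 1), G = H := by
    intro G H
    ext u v
    have : u = v := Subsingleton.elim u v
    subst this
    simp
  rw [Nat.card_eq_one_iff_unique]
  constructor
  · exact ⟨fun a b => Subtype.ext (hall _ _)⟩
  · refine ⟨⊥, ⟨?_, isAcyclic_bot⟩⟩
    rw [connected_iff]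
    exact ⟨fun u v => by rw [Subsingleton.elim u v], ⟨0⟩⟩

/-- The subgraph whose vertex set is everything and whose edges are those of `G`. -/
def fullSub {n : ℕ} (G : SimpleGraph (Fin n)) : (completeGraph (Fin n)).Subgraph where
  verts := Set.univ
  Adj := G.Adj
  adj_sub := fun h => G.ne_of_adj h
  edge_vert := fun _ => Set.mem_univ _
  symm := G.symm

noncomputable def spanningTree_equiv (n : ℕ) :
    {T : (completeGraph (Fin n)).Subgraph // T.IsSpanning ∧ T.coe.IsTree} ≃
    {G : SimpleGraph (Fin n) // G.IsTree} where
  toFun := fun T => ⟨T.1.spanningCoe,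
    (isTree_iff_of_iso (T.1.spanningCoeEquivCoeOfSpanning T.2.1)).mpr T.2.2⟩
  invFun := fun G => ⟨fullSub G.1, fun v => Set.mem_univ v,
    (isTree_iff_of_iso ((fullSub G.1).spanningCoeEquivCoeOfSpanning
      (fun v => Set.mem_univ v))).mp G.2⟩
  left_inv := fun T => by
    apply Subtype.ext
    apply SimpleGraph.Subgraph.ext
    · exact (T.2.1.verts_eq_univ).symm
    · rfl
  right_inv := fun G => Subtype.ext rfl

end Bridge

/-- Cayley's formula: the number of spanning trees of the complete graph on `n ≥ 1`
vertices is `n ^ (n - 2)`. -/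
theorem cayley_formula (n : ℕ) (hn : 0 < n) :
    spanningTreeCount (completeGraph (Fin n)) = n ^ (n - 2) := by
  rw [spanningTreeCount, Nat.card_congr (spanningTree_equiv n)]
  rcases Nat.lt_or_ge n 2 with h | h
  · have hn1 : n = 1 := by omega
    subst hn1
    simpa using card_trees_one
  · exact card_trees h
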